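/- Let E be a real Banach space, let T₀ : E ≃L[ℝ] E be a continuous linear equivalence, let T₁ : E →L[ℝ] E be a continuous linear map, and let 0 ≤ ε < 1 be such that (T₁ − T₀) '' closedBall 0 1 ⊆ ε • (T₀ '' closedBall 0 1). Then T₁ is bijective (hence a continuous linear equivalence of E by the open mapping theorem), and moreover ‖T₁⁻¹ x‖ ≤ (1 − ε)⁻¹ · ‖T₀⁻¹ x‖ for every x ∈ E, and T₁ '' closedBall 0 1 ⊆ (1 + ε) • (T₀ '' closedBall 0 1). -/
import Mathlib


open Pointwise Metric

/-- if `T₀` is a continuous linear equivalence of a real Banach space `E`,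
`T₁` a continuous linear map with `(T₁ − T₀) '' B̄(0,1) ⊆ ε • (T₀ '' B̄(0,1))` for some
`0 ≤ ε < 1`, then `T₁` is bijective, `‖T₁⁻¹ x‖ ≤ (1 − ε)⁻¹ * ‖T₀⁻¹ x‖` for every `x`, and
`T₁ '' B̄(0,1) ⊆ (1 + ε) • (T₀ '' B̄(0,1))`. -/
theorem stmt3 {E : Type*} [NormedAddCommGroup E] [NormedSpace ℝ E] [CompleteSpace E]
    (T₀ : E ≃L[ℝ] E) (T₁ : E →L[ℝ] E) (ε : ℝ) (hε0 : 0 ≤ ε) (hε1 : ε < 1)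
    (hcolo : ⇑(T₁ - (T₀ : E →L[ℝ] E)) '' closedBall (0 : E) 1 ⊆
      ε • (⇑T₀ '' closedBall (0 : E) 1)) :
    Function.Bijective T₁ ∧
      (∀ x : E, ‖Function.invFun T₁ x‖ ≤ (1 - ε)⁻¹ * ‖T₀.symm x‖) ∧
      ⇑T₁ '' closedBall (0 : E) 1 ⊆ (1 + ε) • (⇑T₀ '' closedBall (0 : E) 1) := by
  set D : E →L[ℝ] E := (T₀.symm : E →L[ℝ] E).comp (T₁ - (T₀ : E →L[ℝ] E)) with hDdef
  -- pointwise bound on the unit ball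
  have hDpt : ∀ x : E, ‖x‖ ≤ 1 → ‖D x‖ ≤ ε := by
    intro x hx
    have hmem : (T₁ - (T₀ : E →L[ℝ] E)) x ∈ ε • (⇑T₀ '' closedBall (0 : E) 1) :=
      hcolo (Set.mem_image_of_mem _ (by simpa [mem_closedBall, dist_zero_right] using hx))
    rcases hmem with ⟨w, ⟨y, hy, rfl⟩, hw⟩
    have hy1 : ‖y‖ ≤ 1 := by simpa [mem_closedBall, dist_zero_right] using hy
    have : D x = ε • y := by
      simp only [hDdef, ContinuousLinearMap.comp_apply, ← hw,
        ContinuousLinearEquiv.coe_coe, map_smul]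
      simp
    rw [this, norm_smul, Real.norm_eq_abs, abs_of_nonneg hε0]
    calc ε * ‖y‖ ≤ ε * 1 := by nlinarith [norm_nonneg y]
      _ = ε := mul_one ε
  have hDnorm : ‖D‖ ≤ ε :=
    ContinuousLinearMap.opNorm_le_of_unit_norm hε0 fun x hx => hDpt x hx.le
  have hneg : ‖(-D : E →L[ℝ] E)‖ < 1 := by rw [norm_neg]; exact lt_of_le_of_lt hDnorm hε1
  set u : (E →L[ℝ] E)ˣ := Units.oneSub (-D) hneg with hu
  have huval : (u : E →L[ℝ] E) = 1 + D := by simp [hu, sub_neg_eq_add]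
  -- T₁ = T₀ ∘ u
  have hT₁ : ∀ x : E, T₁ x = T₀ ((u : E →L[ℝ] E) x) := by
    intro x
    simp [huval, hDdef, map_add]
  set V : E →L[ℝ] E := ↑u⁻¹ with hV
  have hVu : ∀ x : E, V ((u : E →L[ℝ] E) x) = x := by
    intro x
    rw [← ContinuousLinearMap.mul_apply, hV, u.inv_mul, ContinuousLinearMap.one_apply]
  have huV : ∀ x : E, (u : E →L[ℝ] E) (V x) = x := by
    intro x
    rw [← ContinuousLinearMap.mul_apply, hV, u.mul_inv, ContinuousLinearMap.one_apply]
  have hubij : Function.Bijective (u : E →L[ℝ] E) :=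
    ⟨Function.LeftInverse.injective hVu, Function.RightInverse.surjective huV⟩
  have hbij : Function.Bijective T₁ := by
    have : ⇑T₁ = ⇑T₀ ∘ ⇑(u : E →L[ℝ] E) := funext fun x => hT₁ x
    rw [this]
    exact T₀.bijective.comp hubij
  -- norm of V
  have hVnorm : ‖V‖ ≤ (1 - ε)⁻¹ := by
    have h1 : ‖V‖ = ‖∑' n : ℕ, (-D) ^ n‖ := rfl
    have h2 : ‖∑' n : ℕ, (-D) ^ n‖ ≤ ‖(1 : E →L[ℝ] E)‖ - 1 + (1 - ‖(-D : E →L[ℝ] E)‖)⁻¹ :=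
      tsum_geometric_le_of_norm_lt_one _ hneg
    have h3 : ‖(1 : E →L[ℝ] E)‖ ≤ 1 := ContinuousLinearMap.norm_id_le
    have h4 : (1 - ‖(-D : E →L[ℝ] E)‖)⁻¹ ≤ (1 - ε)⁻¹ := by
      apply inv_anti₀ (by linarith)
      have : ‖(-D : E →L[ℝ] E)‖ ≤ ε := by rwa [norm_neg]
      linarith
    rw [h1]
    linarith
  refine ⟨hbij, ?_, ?_⟩
  · intro x
    have hWx : T₁ (V (T₀.symm x)) = x := by
      rw [hT₁, huV]; simp
    have hinv : Function.invFun T₁ x = V (T₀.symm x) := by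
      apply hbij.injective
      rw [hWx, Function.rightInverse_invFun hbij.surjective x]
    rw [hinv]
    calc ‖V (T₀.symm x)‖ ≤ ‖V‖ * ‖T₀.symm x‖ := V.le_opNorm _
      _ ≤ (1 - ε)⁻¹ * ‖T₀.symm x‖ :=
        mul_le_mul_of_nonneg_right hVnorm (norm_nonneg _)
  · rintro z ⟨x, hx, rfl⟩
    have hx1 : ‖x‖ ≤ 1 := by simpa [mem_closedBall, dist_zero_right] using hx
    have hmem : (T₁ - (T₀ : E →L[ℝ] E)) x ∈ ε • (⇑T₀ '' closedBall (0 : E) 1) :=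
      hcolo (Set.mem_image_of_mem _ hx)
    rcases hmem with ⟨w, ⟨y, hy, rfl⟩, hw⟩
    have hy1 : ‖y‖ ≤ 1 := by simpa [mem_closedBall, dist_zero_right] using hy
    have heq : T₁ x = T₀ (x + ε • y) := by
      have h1 : T₁ x - T₀ x = ε • T₀ y := by
        simpa [ContinuousLinearMap.sub_apply] using hw.symm
      have := map_add T₀ x (ε • y)
      rw [map_smul] at this
      rw [this, ← h1]
      abel
    have hpos : (0:ℝ) < 1 + ε := by linarith
    refine ⟨T₀ ((1 + ε)⁻¹ • (x + ε • y)), ⟨(1 + ε)⁻¹ • (x + ε • y), ?_, rfl⟩, ?_⟩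
    · simp only [mem_closedBall, dist_zero_right, norm_smul, Real.norm_eq_abs,
        abs_of_pos (inv_pos.mpr hpos)]
      have hxy : ‖x + ε • y‖ ≤ 1 + ε := by
        calc ‖x + ε • y‖ ≤ ‖x‖ + ‖ε • y‖ := norm_add_le _ _
          _ ≤ 1 + ε := by
            rw [norm_smul, Real.norm_eq_abs, abs_of_nonneg hε0]
            nlinarith [norm_nonneg y]
      calc (1 + ε)⁻¹ * ‖x + ε • y‖ ≤ (1 + ε)⁻¹ * (1 + ε) :=
            mul_le_mul_of_nonneg_left hxy (inv_pos.mpr hpos).le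
        _ = 1 := inv_mul_cancel₀ hpos.ne'
    · show (1 + ε) • T₀ ((1 + ε)⁻¹ • (x + ε • y)) = T₁ x
      rw [← map_smul, smul_smul, mul_inv_cancel₀ hpos.ne', one_smul, heq]
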